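/- arXiv:2406.03504 — 7 statements merged into one kernel-verified Lean document; each statement's English description precedes it below -/
import Mathlib

section
/- Let h: ℝ → ℝ ∪ {+∞} be proper, closed, convex with h(0) = 0 and 0 an accumulation point of dom(h), and let λ > 0. Define g₁(x) = λ·‖x‖₀ + h(x) restricted to x ≠ 0, i.e., g₁(x) = h(x) + λ if x ≠ 0 and g₁(0) = +∞. Then the convex conjugate of g₁ satisfies g₁*(v) = h*(v) − λ for all v ∈ ℝ. -/
open Classical

noncomputable section

def EDom (ω : ℝ → EReal) : Set ℝ := {x | ω x < ⊤}

def EProper (ω : ℝ → EReal) : Prop := (∀ x, ω x ≠ ⊥) ∧ ∃ x, ω x ≠ ⊤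

def EConvex (ω : ℝ → EReal) : Prop :=
  ∀ x y a b : ℝ, 0 ≤ a → 0 ≤ b → a + b = 1 →
    ω (a * x + b * y) ≤ (a : EReal) * ω x + (b : EReal) * ω y

def EClosed (ω : ℝ → EReal) : Prop := LowerSemicontinuous ω

/-- Convex conjugate of a function `ℝ → EReal`. -/
def conj (ω : ℝ → EReal) (v : ℝ) : EReal := ⨆ x : ℝ, ((v * x : ℝ) : EReal) - ω x

theorem stmt_1 (h : ℝ → EReal) (lam : ℝ) (hlam : 0 < lam)
    (hProper : EProper h) (hClosed : EClosed h) (hConvex : EConvex h)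
    (h0 : h 0 = 0) (hAcc : AccPt 0 (Filter.principal (EDom h))) :
    ∀ v : ℝ,
      conj (fun x => if x = 0 then ⊤ else h x + (lam : EReal)) v
        = conj h v - (lam : EReal) := by
  intro v
  set F : ℝ → EReal := fun x => ((v * x : ℝ) : EReal) - h x with hFdef
  set F' : ℝ → EReal := fun x => if x = 0 then ⊥ else F x with hF'def
  -- a nonzero point of the domain
  obtain ⟨x₀, ⟨_, hx₀dom⟩, hx₀ne⟩ :=
    accPt_iff_nhds.1 hAcc Set.univ Filter.univ_mem
  have hx₀bot : h x₀ ≠ ⊥ := hProper.1 x₀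
  have hx₀top : h x₀ ≠ ⊤ := hx₀dom.ne
  set M : ℝ := (h x₀).toReal with hMdef
  have hM : h x₀ = (M : EReal) := (EReal.coe_toReal hx₀top hx₀bot).symm
  -- claim 0 : 0 ≤ ⨆ F'
  have claim0 : (0 : EReal) ≤ ⨆ x, F' x := by
    rw [← EReal.ge_of_forall_gt_iff_ge]
    intro z hz
    have hz' : z < 0 := by exact_mod_cast hz
    set c : ℝ := v * x₀ - M with hcdef
    set t : ℝ := min 1 ((-z) / (|c| + 1)) with htdef
    have hcpos : (0:ℝ) < |c| + 1 := by positivity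
    have ht0 : 0 < t := lt_min one_pos (div_pos (by linarith) hcpos)
    have ht1 : t ≤ 1 := min_le_left _ _
    have htz : z ≤ t * c := by
      have h1 : t * |c| ≤ ((-z) / (|c| + 1)) * |c| := by
        apply mul_le_mul_of_nonneg_right (min_le_right _ _) (abs_nonneg c)
      have h2 : ((-z) / (|c| + 1)) * |c| ≤ -z := by
        rw [div_mul_eq_mul_div, div_le_iff₀ hcpos]
        nlinarith [abs_nonneg c]
      nlinarith [neg_abs_le c, abs_nonneg c, ht0.le]
    have hne : t * x₀ ≠ 0 := mul_ne_zero ht0.ne' hx₀ne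
    have hconv : h (t * x₀) ≤ ((t * M : ℝ) : EReal) := by
      have := hConvex x₀ 0 t (1 - t) ht0.le (by linarith) (by ring)
      simp only [mul_zero, add_zero, h0, mul_zero] at this
      calc h (t * x₀) ≤ (t : EReal) * h x₀ := by
            simpa using this
        _ = ((t * M : ℝ) : EReal) := by rw [hM, ← EReal.coe_mul]
    have hFt : ((z : ℝ) : EReal) ≤ F' (t * x₀) := by
      have : F (t * x₀) ≥ ((v * (t * x₀) : ℝ) : EReal) - ((t * M : ℝ) : EReal) :=
        EReal.sub_le_sub le_rfl hconv
      have h3 : ((v * (t * x₀) : ℝ) : EReal) - ((t * M : ℝ) : EReal)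
          = ((t * c : ℝ) : EReal) := by
        rw [← EReal.coe_sub, EReal.coe_eq_coe_iff, hcdef]
        ring
      have h4 : ((z : ℝ) : EReal) ≤ ((t * c : ℝ) : EReal) := by exact_mod_cast htz
      have : ((z : ℝ) : EReal) ≤ F (t * x₀) := h4.trans (h3 ▸ this)
      simpa [hF'def, hne] using this
    exact hFt.trans (le_iSup _ (t * x₀))
  -- claim 1 : ⨆ F = ⨆ F'
  have claim1 : (⨆ x, F x) = ⨆ x, F' x := by
    apply le_antisymm
    · apply iSup_le
      intro x
      by_cases hx : x = 0
      · subst hx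
        have : F 0 = 0 := by simp [hFdef, h0]
        rw [this]; exact claim0
      · exact le_trans (by simp [hF'def, hx]) (le_iSup F' x)
    · apply iSup_le
      intro x
      by_cases hx : x = 0
      · simp [hF'def, hx]
      · exact le_trans (by simp [hF'def, hx]) (le_iSup F x)
  -- claim 2 : conj g₁ v = ⨆ (F' - lam)
  have claim2 :
      conj (fun x => if x = 0 then ⊤ else h x + (lam : EReal)) v
        = ⨆ x, (F' x - (lam : EReal)) := by
    unfold conj
    congr 1
    funext x
    by_cases hx : x = 0
    · simp [hx, hF'def]
    · simp only [hF'def, hFdef, if_neg hx]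
      rw [sub_eq_add_neg, EReal.neg_add (Or.inl (hProper.1 x)) (Or.inr (EReal.coe_ne_bot lam))]
      rw [sub_eq_add_neg, sub_eq_add_neg, sub_eq_add_neg, ← add_assoc]
  -- claim 3 : ⨆ (F' - lam) = (⨆ F') - lam
  have claim3 : (⨆ x, (F' x - (lam : EReal))) = (⨆ x, F' x) - (lam : EReal) := by
    apply le_antisymm
    · exact iSup_le fun x => EReal.sub_le_sub (le_iSup F' x) le_rfl
    · rw [EReal.sub_le_iff_le_add (Or.inl (EReal.coe_ne_bot lam))
        (Or.inl (EReal.coe_ne_top lam))]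
      apply iSup_le
      intro x
      calc F' x = (F' x - (lam : EReal)) + (lam : EReal) := EReal.sub_add_cancel.symm
        _ ≤ (⨆ y, (F' y - (lam : EReal))) + (lam : EReal) :=
            add_le_add_left (le_iSup (fun y => F' y - (lam : EReal)) x) _
  rw [claim2, claim3, ← claim1]
  rfl
end
end

section
/- Let h: ℝ → ℝ ∪ {+∞} be proper, closed, convex with h(0) = 0, and let λ > 0. Define g(x) = λ·‖x‖₀ + h(x). Then the convex conjugate satisfies g*(v) = max(h*(v) − λ, 0) for all v ∈ ℝ, provided 0 is an accumulation point of dom(h). -/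
open Classical

noncomputable section

/-- The scalar "ℓ₀-norm": `0` at `0`, `1` elsewhere. -/
def norm0 (x : ℝ) : ℝ := if x = 0 then 0 else 1

theorem stmt_2 (h : ℝ → EReal) (lam : ℝ) (hlam : 0 < lam)
    (hProper : EProper h) (hClosed : EClosed h) (hConvex : EConvex h)
    (h0 : h 0 = 0) (hAcc : AccPt 0 (Filter.principal (EDom h))) :
    ∀ v : ℝ,
      conj (fun x => ((lam * norm0 x : ℝ) : EReal) + h x) v
        = max (conj h v - (lam : EReal)) 0 := by
  intro v
  set g : ℝ → EReal := fun x => ((lam * norm0 x : ℝ) : EReal) + h x with hg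
  have hg0 : g 0 = 0 := by simp [hg, norm0, h0]
  have hgx : ∀ x : ℝ, x ≠ 0 → g x = (lam : EReal) + h x := by
    intro x hx; simp [hg, norm0, hx]
  -- 0 ≤ conj g v
  have hconjg0 : (0 : EReal) ≤ conj g v := by
    have := le_iSup (fun x : ℝ => ((v * x : ℝ) : EReal) - g x) 0
    simpa [hg0, conj] using this
  apply le_antisymm
  · -- conj g v ≤ max (conj h v - lam) 0
    apply iSup_le
    intro x
    by_cases hx : x = 0
    · subst hx
      simp [hg0]
    · refine le_trans ?_ (le_max_left _ _)
      rw [hgx x hx]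
      have h1 : ((v * x : ℝ) : EReal) - h x ≤ conj h v :=
        le_iSup (fun y : ℝ => ((v * y : ℝ) : EReal) - h y) x
      -- vx - (lam + h x) ≤ conj h v - lam
      rw [EReal.le_sub_iff_add_le (Or.inl (EReal.coe_ne_bot lam))
        (Or.inl (EReal.coe_ne_top lam))]
      calc ((v * x : ℝ) : EReal) - ((lam : EReal) + h x) + lam
          ≤ ((v * x : ℝ) : EReal) - h x := by
            by_cases hT : h x = ⊤
            · simp [hT, EReal.sub_top]
            · lift h x to ℝ using ⟨hT, hProper.1 x⟩ with r
              norm_cast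
              linarith
        _ ≤ conj h v := h1
  · -- max (conj h v - lam) 0 ≤ conj g v
    apply max_le _ hconjg0
    apply EReal.sub_le_of_le_add'
    apply iSup_le
    intro x
    by_cases hx : x = 0
    · subst hx
      have : (0 : EReal) ≤ (lam : EReal) + conj g v :=
        add_nonneg (by exact_mod_cast hlam.le) hconjg0
      simpa [h0] using this
    · have h2 : ((v * x : ℝ) : EReal) - g x ≤ conj g v :=
        le_iSup (fun y : ℝ => ((v * y : ℝ) : EReal) - g y) x
      rw [hgx x hx] at h2
      calc ((v * x : ℝ) : EReal) - h x
          ≤ (lam : EReal) + (((v * x : ℝ) : EReal) - ((lam : EReal) + h x)) := by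
            by_cases hT : h x = ⊤
            · simp [hT, EReal.sub_top]
            · lift h x to ℝ using ⟨hT, hProper.1 x⟩ with r
              norm_cast
              linarith
        _ ≤ (lam : EReal) + conj g v := add_le_add_right h2 _
end
end

section
/- Let h: ℝ → ℝ ∪ {+∞} be proper, closed, convex, with h(0) = 0 and 0 an accumulation point of dom(h), and let λ > 0. For a node ν = (S₀, S₁, S•) partitioning {1,…,n}, define g^ν(x) = λ‖x‖₀ + Σᵢ h(xᵢ) + η(x ∈ X^ν) where X^ν = {x : x_{S₀} = 0, x_{S₁} ≠ 0 componentwise}. Then (g^ν)* is separable and its i-th coordinate function equals: 0 if i ∈ S₀; h*(v) − λ if i ∈ S₁; max(h*(v) − λ, 0) if i ∈ S•. -/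
open Classical

noncomputable section

/-- Convex conjugate of a function on `ℝⁿ`. -/
def conjN {n : ℕ} (g : (Fin n → ℝ) → EReal) (v : Fin n → ℝ) : EReal :=
  ⨆ x : Fin n → ℝ, ((∑ i, v i * x i : ℝ) : EReal) - g x

/-- The ℓ₀-"norm" of a vector: number of nonzero entries. -/
def norm0N {n : ℕ} (x : Fin n → ℝ) : ℕ :=
  (Finset.univ.filter fun i => x i ≠ 0).card

/-- Convex indicator: `0` if the condition holds, `⊤` otherwise. -/
def ind (p : Prop) : EReal := if p then 0 else ⊤

/-- The regularizer `g^ν` at a node `ν = (S₀, S₁, S•)`. -/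
def gnode {n : ℕ} (h : ℝ → EReal) (lam : ℝ) (S0 S1 : Finset (Fin n))
    (x : Fin n → ℝ) : EReal :=
  ((lam * (norm0N x : ℝ) : ℝ) : EReal) + (∑ i, h (x i))
    + ind ((∀ i ∈ S0, x i = 0) ∧ (∀ i ∈ S1, x i ≠ 0))

/-! ### Auxiliary lemmas -/

instance : Nonempty {t : ℝ // t ≠ 0} := ⟨⟨1, one_ne_zero⟩⟩

lemma ind_true {p : Prop} (hp : p) : ind p = 0 := by unfold ind; exact if_pos hp

lemma ind_false {p : Prop} (hp : ¬ p) : ind p = ⊤ := by unfold ind; exact if_neg hp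

lemma ind_ne_bot (p : Prop) : ind p ≠ ⊥ := by
  unfold ind; split <;> simp

lemma ereal_coe_sum {α : Type*} (s : Finset α) (f : α → ℝ) :
    ((∑ i ∈ s, f i : ℝ) : EReal) = ∑ i ∈ s, ((f i : ℝ) : EReal) :=
  map_sum (⟨⟨Real.toEReal, EReal.coe_zero⟩, EReal.coe_add⟩ : ℝ →+ EReal) f s

lemma ereal_sum_ne_bot {α : Type*} (s : Finset α) (f : α → EReal)
    (hne : ∀ a ∈ s, f a ≠ ⊥) : ∑ i ∈ s, f i ≠ ⊥ := by
  induction s using Finset.induction_on with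
  | empty => simp
  | insert _ _ hni ih =>
    rw [Finset.sum_insert hni, Ne, EReal.add_eq_bot_iff]
    push_neg
    exact ⟨hne _ (Finset.mem_insert_self _ _),
      ih fun a ha => hne a (Finset.mem_insert_of_mem ha)⟩

lemma ereal_sum_eq_bot {α : Type*} (s : Finset α) (f : α → EReal)
    {a : α} (ha : a ∈ s) (hta : f a = ⊥) : ∑ i ∈ s, f i = ⊥ := by
  rw [← Finset.add_sum_erase _ _ ha, hta, EReal.bot_add]

lemma ereal_sum_eq_top {α : Type*} (s : Finset α) (f : α → EReal)
    (hne : ∀ a ∈ s, f a ≠ ⊥) {a : α} (ha : a ∈ s) (hta : f a = ⊤) :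
    ∑ i ∈ s, f i = ⊤ := by
  rw [← Finset.add_sum_erase _ _ ha, hta]
  exact EReal.top_add_of_ne_bot
    (ereal_sum_ne_bot _ _ fun b hb => hne b (Finset.mem_of_mem_erase hb))

lemma ereal_coe_sub_sum {α : Type*} (s : Finset α) (r : α → ℝ) (g : α → EReal)
    (hg : ∀ i ∈ s, g i ≠ ⊥) :
    ((∑ i ∈ s, r i : ℝ) : EReal) - ∑ i ∈ s, g i
      = ∑ i ∈ s, (((r i : ℝ) : EReal) - g i) := by
  by_cases htop : ∃ j ∈ s, g j = ⊤
  · obtain ⟨j, hjs, hj⟩ := htop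
    rw [ereal_sum_eq_top s g hg hjs hj, EReal.sub_top]
    symm
    refine ereal_sum_eq_bot s _ hjs ?_
    rw [hj, EReal.sub_top]
  · push_neg at htop
    have hb : ∀ i ∈ s, g i = (((g i).toReal : ℝ) : EReal) := fun i hi =>
      (EReal.coe_toReal (htop i hi) (hg i hi)).symm
    rw [Finset.sum_congr rfl hb, ← ereal_coe_sum, ← EReal.coe_sub,
      ← Finset.sum_sub_distrib, ereal_coe_sum]
    refine Finset.sum_congr rfl fun i hi => ?_
    rw [EReal.coe_sub, ← hb i hi]

lemma ereal_sub_add_coe (a b : EReal) (c : ℝ) :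
    a - (((c : ℝ) : EReal) + b) = a - b - ((c : ℝ) : EReal) := by
  rw [sub_eq_add_neg a (((c : ℝ) : EReal) + b),
    EReal.neg_add (Or.inl (EReal.coe_ne_bot c)) (Or.inl (EReal.coe_ne_top c)),
    sub_eq_add_neg (-((c : ℝ) : EReal)) b, add_comm (-((c : ℝ) : EReal)) (-b),
    ← add_assoc, ← sub_eq_add_neg a b, ← sub_eq_add_neg]

lemma ereal_iSup_sub_const {ι : Type*} [Nonempty ι] (f : ι → EReal) (c : ℝ) :
    ⨆ i, (f i - (c : EReal)) = (⨆ i, f i) - (c : EReal) := by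
  apply le_antisymm
  · exact iSup_le fun i => EReal.sub_le_sub (le_iSup f i) le_rfl
  · apply EReal.sub_le_of_le_add
    refine iSup_le fun i => ?_
    calc f i = (f i - (c : EReal)) + c := EReal.sub_add_cancel.symm
    _ ≤ (⨆ j, (f j - (c : EReal))) + c :=
      add_le_add_left (le_iSup (fun j => f j - (c : EReal)) i) _

lemma ereal_iSup_add_iSup {ι κ : Type*} [Nonempty ι] [Nonempty κ]
    (f : ι → EReal) (g : κ → EReal) :
    (⨆ i, f i) + (⨆ j, g j) = ⨆ i, ⨆ j, f i + g j := by
  apply le_antisymm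
  · apply EReal.add_le_of_forall_lt
    intro a' ha' b' hb'
    obtain ⟨i, hi⟩ := lt_iSup_iff.1 ha'
    obtain ⟨j, hj⟩ := lt_iSup_iff.1 hb'
    calc a' + b' ≤ f i + g j := add_le_add hi.le hj.le
    _ ≤ _ := le_iSup₂ (f := fun i j => f i + g j) i j
  · exact iSup₂_le fun i j => add_le_add (le_iSup f i) (le_iSup g j)

set_option maxHeartbeats 1000000 in
lemma iSup_sum_split {n : ℕ} (F : Fin n → ℝ → EReal) :
    (⨆ x : Fin n → ℝ, ∑ i, F i (x i)) = ∑ i, ⨆ t : ℝ, F i t := by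
  induction n with
  | zero => simp
  | succ m ih =>
    have hsurj : Function.Surjective
        (fun p : ℝ × (Fin m → ℝ) => (Fin.cons p.1 p.2 : Fin (m + 1) → ℝ)) := by
      intro x
      exact ⟨(x 0, fun i => x i.succ), (Fin.cons_self_tail x)⟩
    calc (⨆ x : Fin (m + 1) → ℝ, ∑ i, F i (x i))
        = ⨆ p : ℝ × (Fin m → ℝ), ∑ i, F i ((Fin.cons p.1 p.2 : Fin (m + 1) → ℝ) i) :=
          (hsurj.iSup_comp fun x => ∑ i, F i (x i)).symm
      _ = ⨆ a : ℝ, ⨆ b : Fin m → ℝ, (F 0 a + ∑ i, F i.succ (b i)) := by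
          rw [iSup_prod]
          refine iSup_congr fun a => iSup_congr fun b => ?_
          rw [Fin.sum_univ_succ, Fin.cons_zero]
          exact congrArg _ (Finset.sum_congr rfl fun j _ => by rw [Fin.cons_succ])
      _ = (⨆ a : ℝ, F 0 a) + ⨆ b : Fin m → ℝ, ∑ i, F (Fin.succ i) (b i) :=
          (ereal_iSup_add_iSup _ _).symm
      _ = ∑ i, ⨆ t : ℝ, F i t := by
          rw [ih fun i => F i.succ, Fin.sum_univ_succ]

lemma sup_split (f : ℝ → EReal) :
    (⨆ t : ℝ, f t) = f 0 ⊔ ⨆ t : {t : ℝ // t ≠ 0}, f t := by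
  apply le_antisymm
  · refine iSup_le fun t => ?_
    by_cases ht : t = 0
    · subst ht; exact le_sup_left
    · exact le_sup_of_le_right (le_iSup (fun s : {t : ℝ // t ≠ 0} => f s) ⟨t, ht⟩)
  · exact sup_le (le_iSup f 0) (iSup_le fun t => le_iSup f t)

lemma key_nonneg (h : ℝ → EReal) (hProper : EProper h) (hConvex : EConvex h)
    (h0 : h 0 = 0) (hAcc : AccPt 0 (Filter.principal (EDom h))) (v : ℝ) :
    (0 : EReal) ≤ ⨆ t : {t : ℝ // t ≠ 0}, (((v * (t : ℝ) : ℝ) : EReal) - h t) := by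
  -- get a nonzero point of the domain
  obtain ⟨x₀, ⟨-, hx₀dom⟩, hx₀ne⟩ :=
    accPt_iff_nhds.1 hAcc Set.univ Filter.univ_mem
  have hx₀top : h x₀ ≠ ⊤ := (lt_top_iff_ne_top.1 hx₀dom)
  have hx₀bot : h x₀ ≠ ⊥ := hProper.1 x₀
  set r : ℝ := (h x₀).toReal with hr
  have hx₀r : h x₀ = (r : EReal) := (EReal.coe_toReal hx₀top hx₀bot).symm
  set M : ℝ := v * x₀ - r with hM
  rw [← EReal.ge_of_forall_gt_iff_ge]
  intro z hz
  have hz' : z < 0 := by exact_mod_cast hz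
  -- choose a ∈ (0,1] with z ≤ a * M
  obtain ⟨a, ha0, ha1, haz⟩ : ∃ a : ℝ, 0 < a ∧ a ≤ 1 ∧ z ≤ a * M := by
    rcases le_or_gt 0 M with hM0 | hM0
    · exact ⟨1, one_pos, le_refl 1, by nlinarith⟩
    · refine ⟨min 1 (z / (2 * M)), ?_, min_le_left _ _, ?_⟩
      · exact lt_min one_pos (div_pos_iff.2 (Or.inr ⟨hz', by linarith⟩))
      · have hMne : M ≠ 0 := ne_of_lt hM0
        have h2 : (z / (2 * M)) * M = z / 2 := by
          field_simp
        rcases min_cases 1 (z / (2 * M)) with ⟨he, hle⟩ | ⟨he, hle⟩ <;> rw [he]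
        · have h3 := mul_le_mul_of_nonpos_right hle (le_of_lt hM0)
          rw [one_mul] at h3
          nlinarith
        · nlinarith
  have hax₀ : a * x₀ ≠ 0 := mul_ne_zero (ne_of_gt ha0) hx₀ne
  have hconv : h (a * x₀) ≤ ((a * r : ℝ) : EReal) := by
    have hcv := hConvex x₀ 0 a (1 - a) (le_of_lt ha0) (by linarith) (by ring)
    rw [mul_zero, add_zero, h0, mul_zero, add_zero, hx₀r] at hcv
    calc h (a * x₀) ≤ ((a : ℝ) : EReal) * ((r : ℝ) : EReal) := hcv
    _ = ((a * r : ℝ) : EReal) := by rw [EReal.coe_mul]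
  calc ((z : ℝ) : EReal) ≤ ((a * M : ℝ) : EReal) := EReal.coe_le_coe_iff.2 haz
    _ = ((v * (a * x₀) : ℝ) : EReal) - ((a * r : ℝ) : EReal) := by
        rw [← EReal.coe_sub]
        norm_cast
        rw [hM]; ring
    _ ≤ ((v * (a * x₀) : ℝ) : EReal) - h (a * x₀) := EReal.sub_le_sub le_rfl hconv
    _ ≤ _ := le_iSup (fun t : {t : ℝ // t ≠ 0} =>
        ((v * (t : ℝ) : ℝ) : EReal) - h t) ⟨a * x₀, hax₀⟩

lemma conj_eq_subtype (h : ℝ → EReal) (hProper : EProper h) (hConvex : EConvex h)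
    (h0 : h 0 = 0) (hAcc : AccPt 0 (Filter.principal (EDom h))) (v : ℝ) :
    conj h v = ⨆ t : {t : ℝ // t ≠ 0}, (((v * (t : ℝ) : ℝ) : EReal) - h t) := by
  unfold conj
  rw [sup_split fun t => ((v * t : ℝ) : EReal) - h t]
  have h00 : ((v * (0 : ℝ) : ℝ) : EReal) - h 0 = 0 := by
    rw [h0, mul_zero]; simp
  rw [h00, sup_eq_right.2 (key_nonneg h hProper hConvex h0 hAcc v)]

/-- Per-coordinate function. -/
def Gc (h : ℝ → EReal) (lam : ℝ) (p q : Prop) (t : ℝ) : EReal :=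
  (if t = 0 then 0 else ((lam : ℝ) : EReal)) + h t + ind (p → t = 0) + ind (q → t ≠ 0)

lemma Gc_ne_bot (h : ℝ → EReal) (lam : ℝ) (p q : Prop) (t : ℝ) (hb : h t ≠ ⊥) :
    Gc h lam p q t ≠ ⊥ := by
  unfold Gc
  rw [Ne, EReal.add_eq_bot_iff, EReal.add_eq_bot_iff, EReal.add_eq_bot_iff]
  push_neg
  refine ⟨⟨⟨?_, hb⟩, ind_ne_bot _⟩, ind_ne_bot _⟩
  split <;> simp

lemma gnode_eq_sum {n : ℕ} (h : ℝ → EReal) (lam : ℝ) (S0 S1 : Finset (Fin n))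
    (x : Fin n → ℝ) (hb : ∀ t, h t ≠ ⊥) :
    gnode h lam S0 S1 x = ∑ i, Gc h lam (i ∈ S0) (i ∈ S1) (x i) := by
  have hA : ((lam * (norm0N x : ℝ) : ℝ) : EReal)
      = ∑ i, (if x i = 0 then 0 else ((lam : ℝ) : EReal)) := by
    have h1 : lam * (norm0N x : ℝ) = ∑ i, (if x i = 0 then 0 else lam) := by
      unfold norm0N
      rw [Finset.card_filter]
      push_cast
      rw [Finset.mul_sum]
      refine Finset.sum_congr rfl fun i _ => ?_
      by_cases hx : x i = 0 <;> simp [hx]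
    rw [h1, ereal_coe_sum]
    refine Finset.sum_congr rfl fun i _ => ?_
    by_cases hx : x i = 0 <;> simp [hx]
  have hB : ind ((∀ i ∈ S0, x i = 0) ∧ (∀ i ∈ S1, x i ≠ 0))
      = ∑ i, (ind ((i ∈ S0) → x i = 0) + ind ((i ∈ S1) → x i ≠ 0)) := by
    have hterm_ne_bot : ∀ i : Fin n,
        ind ((i ∈ S0) → x i = 0) + ind ((i ∈ S1) → x i ≠ 0) ≠ ⊥ := fun i => by
      rw [Ne, EReal.add_eq_bot_iff]; push_neg; exact ⟨ind_ne_bot _, ind_ne_bot _⟩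
    by_cases hc : (∀ i ∈ S0, x i = 0) ∧ (∀ i ∈ S1, x i ≠ 0)
    · rw [ind_true hc]
      symm
      refine Finset.sum_eq_zero fun i _ => ?_
      rw [ind_true (fun hi => hc.1 i hi), ind_true (fun hi => hc.2 i hi), add_zero]
    · rw [ind_false hc]
      symm
      rw [not_and_or] at hc
      rcases hc with hc | hc
      · push_neg at hc
        obtain ⟨i, hiS, hix⟩ := hc
        refine ereal_sum_eq_top _ _ (fun a _ => hterm_ne_bot a) (Finset.mem_univ i) ?_
        rw [ind_false (by tauto)]
        exact EReal.top_add_of_ne_bot (ind_ne_bot _)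
      · push_neg at hc
        obtain ⟨i, hiS, hix⟩ := hc
        refine ereal_sum_eq_top _ _ (fun a _ => hterm_ne_bot a) (Finset.mem_univ i) ?_
        have : ind ((i ∈ S1) → x i ≠ 0) = ⊤ := ind_false (by tauto)
        rw [this]
        exact EReal.add_top_of_ne_bot (ind_ne_bot _)
  rw [gnode, hA, hB, ← Finset.sum_add_distrib, ← Finset.sum_add_distrib]
  refine Finset.sum_congr rfl fun i _ => ?_
  rw [Gc, ← add_assoc]

theorem stmt_4 {n : ℕ} (h : ℝ → EReal) (lam : ℝ) (hlam : 0 < lam)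
    (hProper : EProper h) (hClosed : EClosed h) (hConvex : EConvex h)
    (h0 : h 0 = 0) (hAcc : AccPt 0 (Filter.principal (EDom h)))
    (S0 S1 Sn : Finset (Fin n))
    (hd01 : Disjoint S0 S1) (hd0n : Disjoint S0 Sn) (hd1n : Disjoint S1 Sn)
    (hcover : S0 ∪ S1 ∪ Sn = Finset.univ) :
    ∀ v : Fin n → ℝ,
      conjN (gnode h lam S0 S1) v
        = ∑ i, (if i ∈ S0 then (0 : EReal)
            else if i ∈ S1 then conj h (v i) - (lam : EReal)
            else max (conj h (v i) - (lam : EReal)) 0) := by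
  intro v
  have hb := hProper.1
  have step1 : conjN (gnode h lam S0 S1) v
      = ∑ i, ⨆ t : ℝ, (((v i * t : ℝ) : EReal) - Gc h lam (i ∈ S0) (i ∈ S1) t) := by
    rw [conjN,
      ← iSup_sum_split fun i t => ((v i * t : ℝ) : EReal) - Gc h lam (i ∈ S0) (i ∈ S1) t]
    refine iSup_congr fun x => ?_
    rw [gnode_eq_sum h lam S0 S1 x hb,
      ereal_coe_sub_sum _ _ _ (fun i _ => Gc_ne_bot h lam _ _ _ (hb (x i)))]
  rw [step1]
  refine Finset.sum_congr rfl fun i _ => ?_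
  by_cases h0i : i ∈ S0
  · have h1i : i ∉ S1 := Finset.disjoint_left.1 hd01 h0i
    rw [if_pos h0i]
    have hf0 : ((v i * (0 : ℝ) : ℝ) : EReal) - Gc h lam (i ∈ S0) (i ∈ S1) 0 = 0 := by
      rw [Gc, if_pos rfl, h0, ind_true (fun _ => rfl), ind_true (fun h1 => absurd h1 h1i)]
      simp
    have hft : ∀ t : {t : ℝ // t ≠ 0},
        ((v i * (t : ℝ) : ℝ) : EReal) - Gc h lam (i ∈ S0) (i ∈ S1) (t : ℝ) = ⊥ := by
      rintro ⟨t, ht⟩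
      rw [Gc, ind_false (fun hc => ht (hc h0i))]
      rw [EReal.add_top_of_ne_bot (by
        rw [Ne, EReal.add_eq_bot_iff]; push_neg
        exact ⟨by split <;> simp, hb t⟩)]
      rw [EReal.top_add_of_ne_bot (ind_ne_bot _)]
      exact EReal.sub_top _
    rw [sup_split fun t => ((v i * t : ℝ) : EReal) - Gc h lam (i ∈ S0) (i ∈ S1) t, hf0]
    have hbot : (⨆ t : {t : ℝ // t ≠ 0},
        (((v i * (t : ℝ) : ℝ) : EReal) - Gc h lam (i ∈ S0) (i ∈ S1) (t : ℝ))) = ⊥ := by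
      simp only [hft, iSup_bot]
    rw [hbot]
    simp
  · have hind0 : ∀ t : ℝ, ind ((i ∈ S0) → t = 0) = 0 := fun t =>
      ind_true (fun hi => absurd hi h0i)
    by_cases h1i : i ∈ S1
    · rw [if_neg h0i, if_pos h1i]
      have hf0 : ((v i * (0 : ℝ) : ℝ) : EReal) - Gc h lam (i ∈ S0) (i ∈ S1) 0 = ⊥ := by
        rw [Gc, if_pos rfl, h0, hind0, ind_false (fun hc => (hc h1i) rfl)]
        rw [add_zero, add_zero]
        exact EReal.sub_top _
      have hft : ∀ t : {t : ℝ // t ≠ 0},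
          ((v i * (t : ℝ) : ℝ) : EReal) - Gc h lam (i ∈ S0) (i ∈ S1) (t : ℝ)
            = (((v i * (t : ℝ) : ℝ) : EReal) - h (t : ℝ)) - ((lam : ℝ) : EReal) := by
        rintro ⟨t, ht⟩
        rw [Gc, if_neg ht, hind0, ind_true (fun _ => ht), add_zero, add_zero]
        exact ereal_sub_add_coe _ _ lam
      rw [sup_split fun t => ((v i * t : ℝ) : EReal) - Gc h lam (i ∈ S0) (i ∈ S1) t, hf0,
        conj_eq_subtype h hProper hConvex h0 hAcc (v i), bot_sup_eq,
        iSup_congr hft, ereal_iSup_sub_const _ lam]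
    · rw [if_neg h0i, if_neg h1i]
      have hind1 : ∀ t : ℝ, ind ((i ∈ S1) → t ≠ 0) = 0 := fun t =>
        ind_true (fun hi => absurd hi h1i)
      have hf0 : ((v i * (0 : ℝ) : ℝ) : EReal) - Gc h lam (i ∈ S0) (i ∈ S1) 0 = 0 := by
        rw [Gc, if_pos rfl, h0, hind0, hind1]
        simp
      have hft : ∀ t : {t : ℝ // t ≠ 0},
          ((v i * (t : ℝ) : ℝ) : EReal) - Gc h lam (i ∈ S0) (i ∈ S1) (t : ℝ)
            = (((v i * (t : ℝ) : ℝ) : EReal) - h (t : ℝ)) - ((lam : ℝ) : EReal) := by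
        rintro ⟨t, ht⟩
        rw [Gc, if_neg ht, hind0, hind1, add_zero, add_zero]
        exact ereal_sub_add_coe _ _ lam
      rw [sup_split fun t => ((v i * t : ℝ) : EReal) - Gc h lam (i ∈ S0) (i ∈ S1) t, hf0,
        conj_eq_subtype h hProper hConvex h0 hAcc (v i),
        iSup_congr hft, ereal_iSup_sub_const _ lam, max_comm]
end
end

section
/- Let ν' = (S₀',S₁',S•') be a successor of ν = (S₀,S₁,S•) and i ∈ S•'. Denote by ν_{0,i} (resp. ν'_{0,i}) the node obtained from ν (resp. ν') by moving index i to the zero-set, and similarly ν_{1,i}, ν'_{1,i} for moving to the one-set. Then for any u ∈ ℝᵐ and threshold p̄ ∈ ℝ: D^{ν_{0,i}}(u) > p̄ implies D^{ν'_{0,i}}(u) > p̄, and D^{ν_{1,i}}(u) > p̄ implies D^{ν'_{1,i}}(u) > p̄. -/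
open Classical

noncomputable section

/-- Convex conjugate of a function on `ℝᵐ`. -/
def conjM {m : ℕ} (f : (Fin m → ℝ) → EReal) (u : Fin m → ℝ) : EReal :=
  ⨆ x : Fin m → ℝ, ((∑ j, u j * x j : ℝ) : EReal) - f x

/-- Properness for functions on `ℝᵐ`. -/
def EProperM {m : ℕ} (f : (Fin m → ℝ) → EReal) : Prop :=
  (∀ x, f x ≠ ⊥) ∧ ∃ x, f x ≠ ⊤

/-- Convexity for functions on `ℝᵐ`. -/
def EConvexM {m : ℕ} (f : (Fin m → ℝ) → EReal) : Prop :=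
  ∀ (x y : Fin m → ℝ) (a b : ℝ), 0 ≤ a → 0 ≤ b → a + b = 1 →
    f (a • x + b • y) ≤ (a : EReal) * f x + (b : EReal) * f y

/-- Closedness for functions on `ℝᵐ`. -/
def EClosedM {m : ℕ} (f : (Fin m → ℝ) → EReal) : Prop := LowerSemicontinuous f

/-- The dual objective `D^ν` at a node `ν = (S₀, S₁, S•)` where
`S• = {1,…,n} \ (S₀ ∪ S₁)`. -/
def Dnode {m n : ℕ} (f : (Fin m → ℝ) → EReal) (h : ℝ → EReal)
    (A : Matrix (Fin m) (Fin n) ℝ) (lam : ℝ) (S0 S1 : Finset (Fin n))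
    (u : Fin m → ℝ) : EReal :=
  - conjM f (-u)
    - ∑ i ∈ S1, (conj h (∑ j, A j i * u j) - (lam : EReal))
    - ∑ i ∈ Finset.univ \ (S0 ∪ S1),
        max (conj h (∑ j, A j i * u j) - (lam : EReal)) 0

/-- A finite sum of non-`⊥` extended reals is non-`⊥`. -/
lemma sum_ne_bot_aux {α : Type*} (s : Finset α) (g : α → EReal)
    (hg : ∀ i ∈ s, g i ≠ ⊥) : ∑ i ∈ s, g i ≠ ⊥ := by
  classical
  induction s using Finset.induction_on with
  | empty => simp
  | insert _ _ hx ih =>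
    rename_i a s
    rw [Finset.sum_insert hx]
    simp only [ne_eq, EReal.add_eq_bot_iff, not_or]
    exact ⟨hg a (by simp), ih fun i hi => hg i (by simp [hi])⟩

lemma conj_nonneg_aux (h : ℝ → EReal) (h0 : h 0 = 0) (v : ℝ) :
    (0 : EReal) ≤ conj h v := by
  have := le_iSup (fun x : ℝ => ((v * x : ℝ) : EReal) - h x) 0
  simpa [h0, conj] using this

/-- Monotonicity of the dual objective along successor nodes. -/
lemma Dnode_mono {m n : ℕ} (f : (Fin m → ℝ) → EReal) (h : ℝ → EReal)
    (A : Matrix (Fin m) (Fin n) ℝ) (lam : ℝ) (h0 : h 0 = 0)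
    (S0 S1 S0' S1' : Finset (Fin n)) (hd' : Disjoint S0' S1')
    (hsub0 : S0 ⊆ S0') (hsub1 : S1 ⊆ S1') (u : Fin m → ℝ) :
    Dnode f h A lam S0 S1 u ≤ Dnode f h A lam S0' S1' u := by
  classical
  set t : Fin n → EReal := fun i => conj h (∑ j, A j i * u j) - (lam : EReal) with ht
  set g : Fin n → EReal := fun i => max (t i) 0 with hgdef
  have ht_ne : ∀ i, t i ≠ ⊥ := by
    intro i
    have h1 : conj h (∑ j, A j i * u j) ≠ ⊥ :=
      ne_of_gt (lt_of_lt_of_le (by simp) (conj_nonneg_aux h h0 _))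
    simp only [ht, sub_eq_add_neg, ne_eq, EReal.add_eq_bot_iff, not_or]
    exact ⟨h1, by simp⟩
  have hg0 : ∀ i, (0 : EReal) ≤ g i := fun i => le_max_right _ _
  have hg_ne : ∀ i, g i ≠ ⊥ := fun i => ne_of_gt (lt_of_lt_of_le (by simp) (hg0 i))
  set K : Finset (Fin n) := Finset.univ \ (S0 ∪ S1) with hK
  set K' : Finset (Fin n) := Finset.univ \ (S0' ∪ S1') with hK'
  have hKsub : K' ⊆ K := by
    intro x hx
    simp only [hK, hK', Finset.mem_sdiff, Finset.mem_union] at hx ⊢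
    exact ⟨hx.1, fun hc => hx.2 (hc.imp (fun h => hsub0 h) (fun h => hsub1 h))⟩
  set Δ : Finset (Fin n) := K \ K' with hΔ
  have hS1sub : S1' \ S1 ⊆ Δ := by
    intro x hx
    simp only [Finset.mem_sdiff] at hx
    have hx1' : x ∈ S1' := hx.1
    have hxK : x ∈ K := by
      simp only [hK, Finset.mem_sdiff, Finset.mem_union]
      refine ⟨Finset.mem_univ _, fun hc => ?_⟩
      rcases hc with hc | hc
      · exact (Finset.disjoint_left.1 hd') (hsub0 hc) hx1'
      · exact hx.2 hc
    have hxK' : x ∉ K' := by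
      simp only [hK', Finset.mem_sdiff, Finset.mem_union, not_and, not_not]
      exact fun _ => Or.inr hx1'
    simp only [hΔ, Finset.mem_sdiff]
    exact ⟨hxK, hxK'⟩
  -- key inequality
  have hkey : ∑ i ∈ S1' \ S1, t i ≤ ∑ i ∈ Δ, g i := by
    calc ∑ i ∈ S1' \ S1, t i ≤ ∑ i ∈ S1' \ S1, g i :=
          Finset.sum_le_sum fun i _ => le_max_left _ _
      _ ≤ ∑ i ∈ Δ, g i :=
          Finset.sum_le_sum_of_subset_of_nonneg hS1sub fun i _ _ => hg0 i
  -- sum decompositions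
  have hsplitK : ∑ i ∈ K, g i = ∑ i ∈ Δ, g i + ∑ i ∈ K', g i := by
    rw [hΔ, Finset.sum_sdiff hKsub]
  have hsplitS1 : ∑ i ∈ S1', t i = ∑ i ∈ S1' \ S1, t i + ∑ i ∈ S1, t i :=
    (Finset.sum_sdiff hsub1).symm
  have hΔ_ne : ∑ i ∈ Δ, g i ≠ ⊥ := sum_ne_bot_aux _ _ fun i _ => hg_ne i
  have hK'_ne : ∑ i ∈ K', g i ≠ ⊥ := sum_ne_bot_aux _ _ fun i _ => hg_ne i
  have hdS1_ne : ∑ i ∈ S1' \ S1, t i ≠ ⊥ := sum_ne_bot_aux _ _ fun i _ => ht_ne i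
  have hS1_ne : ∑ i ∈ S1, t i ≠ ⊥ := sum_ne_bot_aux _ _ fun i _ => ht_ne i
  show - conjM f (-u) - ∑ i ∈ S1, t i - ∑ i ∈ K, g i
      ≤ - conjM f (-u) - ∑ i ∈ S1', t i - ∑ i ∈ K', g i
  rw [hsplitK, hsplitS1]
  set C : EReal := - conjM f (-u) with hC
  have e1 : C - ∑ i ∈ S1, t i - (∑ i ∈ Δ, g i + ∑ i ∈ K', g i)
      = C - ∑ i ∈ S1, t i - ∑ i ∈ Δ, g i - ∑ i ∈ K', g i := by
    rw [sub_eq_add_neg (C - ∑ i ∈ S1, t i),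
      EReal.neg_add (Or.inl hΔ_ne) (Or.inr hK'_ne)]
    simp only [sub_eq_add_neg, add_assoc]
  have e2 : C - (∑ i ∈ S1' \ S1, t i + ∑ i ∈ S1, t i)
      = C - ∑ i ∈ S1, t i - ∑ i ∈ S1' \ S1, t i := by
    rw [sub_eq_add_neg C, EReal.neg_add (Or.inl hdS1_ne) (Or.inr hS1_ne)]
    simp only [sub_eq_add_neg, add_assoc]
    rw [add_comm (-∑ i ∈ S1' \ S1, t i)]
  rw [e1, e2]
  exact EReal.sub_le_sub (EReal.sub_le_sub le_rfl hkey) le_rfl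

theorem stmt_8 {m n : ℕ} (f : (Fin m → ℝ) → EReal) (h : ℝ → EReal)
    (A : Matrix (Fin m) (Fin n) ℝ) (lam : ℝ) (hlam : 0 < lam)
    (hfProper : EProperM f) (hfClosed : EClosedM f) (hfConvex : EConvexM f)
    (hProper : EProper h) (hClosed : EClosed h) (hConvex : EConvex h)
    (h0 : h 0 = 0) (hAcc : AccPt 0 (Filter.principal (EDom h)))
    (S0 S1 S0' S1' : Finset (Fin n))
    (hd : Disjoint S0 S1) (hd' : Disjoint S0' S1')
    (hsub0 : S0 ⊆ S0') (hsub1 : S1 ⊆ S1')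
    (i : Fin n) (hi : i ∉ S0' ∪ S1')
    (u : Fin m → ℝ) (pbar : ℝ) :
    ((pbar : EReal) < Dnode f h A lam (insert i S0) S1 u →
        (pbar : EReal) < Dnode f h A lam (insert i S0') S1' u)
      ∧ ((pbar : EReal) < Dnode f h A lam S0 (insert i S1) u →
        (pbar : EReal) < Dnode f h A lam S0' (insert i S1') u) := by
  simp only [Finset.mem_union, not_or] at hi
  constructor
  · intro hlt
    refine lt_of_lt_of_le hlt (Dnode_mono f h A lam h0 _ _ _ _ ?_ ?_ hsub1 u)
    · exact Finset.disjoint_left.2 fun x hx hx' => by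
        rcases Finset.mem_insert.1 hx with rfl | hx
        · exact hi.2 hx'
        · exact (Finset.disjoint_left.1 hd') hx hx'
    · exact Finset.insert_subset_insert _ hsub0
  · intro hlt
    refine lt_of_lt_of_le hlt (Dnode_mono f h A lam h0 _ _ _ _ ?_ hsub0 ?_ u)
    · exact Finset.disjoint_left.2 fun x hx hx' => by
        rcases Finset.mem_insert.1 hx' with rfl | hx'
        · exact hi.1 hx
        · exact (Finset.disjoint_left.1 hd') hx hx'
    · exact Finset.insert_subset_insert _ hsub1
end
end

section
/- Let λ, M > 0 and h(x) = η(|x| ≤ M). Then sup_{v ∈ ℝ} (x·v − max(M|v| − λ, 0)) = (λ/M)|x| + η(|x| ≤ M) for all x ∈ ℝ. That is, the conjugate of v ↦ max(h*(v) − λ, 0) equals x ↦ (λ/M)|x| if |x| ≤ M and +∞ otherwise. -/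
open Classical

noncomputable section

theorem stmt_12 (lam M : ℝ) (hlam : 0 < lam) (hM : 0 < M) :
    ∀ x : ℝ,
      (⨆ v : ℝ, ((x * v - max (M * |v| - lam) 0 : ℝ) : EReal))
        = ((lam / M * |x| : ℝ) : EReal) + ind (|x| ≤ M) := by
  intro x
  by_cases hx : |x| ≤ M
  · rw [ind, if_pos hx, add_zero]
    apply le_antisymm
    · apply iSup_le
      intro v
      apply EReal.coe_le_coe_iff.mpr
      rcases le_or_gt (M * |v|) lam with hv | hv
      · rw [max_eq_right (by linarith), sub_zero, div_mul_eq_mul_div,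
          le_div_iff₀ hM]
        nlinarith [le_abs_self (x*v), abs_mul x v, abs_nonneg x,
          mul_le_mul_of_nonneg_left hv (abs_nonneg x)]
      · rw [max_eq_left (by linarith)]
        rw [div_mul_eq_mul_div, le_div_iff₀ hM]
        nlinarith [le_abs_self (x*v), abs_mul x v, abs_nonneg x, abs_nonneg v,
          mul_nonneg (sub_nonneg.mpr hv.le) (sub_nonneg.mpr hx)]
    · set v₀ : ℝ := lam / M * (if 0 ≤ x then 1 else -1) with hv₀
      have h1 : |v₀| = lam / M := by
        rw [hv₀, abs_mul]
        have : |(if 0 ≤ x then (1:ℝ) else -1)| = 1 := by split <;> simp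
        rw [this, mul_one, abs_of_pos (div_pos hlam hM)]
      have h2 : x * v₀ = lam / M * |x| := by
        rw [hv₀]
        rcases le_or_gt 0 x with h | h
        · rw [if_pos h, abs_of_nonneg h]; ring
        · rw [if_neg (not_le.mpr h), abs_of_neg h]; ring
      have h3 : (x * v₀ - max (M * |v₀| - lam) 0 : ℝ) = lam / M * |x| := by
        rw [h1, h2, mul_div_cancel₀ _ hM.ne', sub_self, max_self, sub_zero]
      calc ((lam / M * |x| : ℝ) : EReal) = ((x * v₀ - max (M * |v₀| - lam) 0 : ℝ) : EReal) := by
            rw [h3]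
        _ ≤ _ := le_iSup (fun v : ℝ => ((x * v - max (M * |v| - lam) 0 : ℝ) : EReal)) v₀
  · rw [ind, if_neg hx, EReal.add_top_of_ne_bot (EReal.coe_ne_bot _)]
    rw [iSup_eq_top]
    intro b hb
    obtain ⟨r, hbr, -⟩ := EReal.exists_between_coe_real hb
    have hd : 0 < |x| - M := by push_neg at hx; linarith
    set t : ℝ := (max r 0) / (|x| - M) + 1 with ht
    have ht0 : 0 ≤ t := by positivity
    set v : ℝ := t * (if 0 ≤ x then 1 else -1) with hv
    refine ⟨v, lt_of_lt_of_le hbr (EReal.coe_le_coe_iff.mpr ?_)⟩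
    have h1 : |v| = t := by
      rw [hv, abs_mul]
      have : |(if 0 ≤ x then (1:ℝ) else -1)| = 1 := by split <;> simp
      rw [this, mul_one, abs_of_nonneg ht0]
    have h2 : x * v = t * |x| := by
      rw [hv]
      rcases le_or_gt 0 x with h | h
      · rw [if_pos h, abs_of_nonneg h]; ring
      · rw [if_neg (not_le.mpr h), abs_of_neg h]; ring
    have h3 : max (M * |v| - lam) 0 ≤ M * t := by
      rw [h1]
      exact max_le (by linarith) (by positivity)
    have h4 : t * (|x| - M) = max r 0 + (|x| - M) := by
      rw [ht]; field_simp
    have h5 : r < t * (|x| - M) := by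
      rw [h4]
      have := le_max_left r 0
      linarith
    rw [h2]
    nlinarith
end
end

section
/- Let λ, α, M > 0 and h(x) = α|x| + η(|x| ≤ M), so h*(v) = M·max(|v| − α, 0). Then sup_{v ∈ ℝ} (x·v − max(h*(v) − λ, 0)) = (α + λ/M)|x| + η(|x| ≤ M) for all x ∈ ℝ. -/
open Classical

noncomputable section

lemma coe_max' (a b : ℝ) : ((max a b : ℝ) : EReal) = max (a : EReal) (b : EReal) :=
  EReal.coe_strictMono.monotone.map_max

lemma self_div_abs (x : ℝ) (hx : x ≠ 0) : x * (x / |x|) = |x| := by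
  have habs : |x| > 0 := abs_pos.mpr hx
  field_simp
  rw [sq_abs]

lemma conj_eq (α M : ℝ) (hα : 0 < α) (hM : 0 < M) (v : ℝ) :
    conj (fun t => ((α * |t| : ℝ) : EReal) + ind (|t| ≤ M)) v
      = ((M * max (|v| - α) 0 : ℝ) : EReal) := by
  unfold conj
  apply le_antisymm
  · apply iSup_le
    intro x
    by_cases hx : |x| ≤ M
    · simp only [ind, if_pos hx, add_zero, ← EReal.coe_sub, EReal.coe_le_coe_iff]
      have h1 : v * x ≤ |v| * |x| := by
        calc v * x ≤ |v * x| := le_abs_self _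
        _ = |v| * |x| := abs_mul _ _
      have h2 : 0 ≤ |x| := abs_nonneg x
      rcases le_or_gt α |v| with hv | hv
      · rw [max_eq_left (by linarith : (0:ℝ) ≤ |v| - α)]
        nlinarith
      · rw [max_eq_right (by linarith : |v| - α ≤ (0:ℝ))]
        nlinarith
    · simp only [ind, if_neg hx]
      rw [EReal.add_top_of_ne_bot (EReal.coe_ne_bot _), EReal.sub_top]
      exact bot_le
  · by_cases hv : α ≤ |v|
    · have hv0 : v ≠ 0 := by
        intro h; rw [h] at hv; simp at hv; linarith
      have habs : |v| > 0 := abs_pos.mpr hv0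
      have key := le_iSup (fun x : ℝ => ((v * x : ℝ) : EReal)
        - ((fun t => ((α * |t| : ℝ) : EReal) + ind (|t| ≤ M)) x)) (M * (v / |v|))
      refine le_trans (le_of_eq ?_) key
      have hax : |M * (v / |v|)| = M := by
        rw [abs_mul, abs_div, abs_abs, div_self (ne_of_gt habs), mul_one,
          abs_of_pos hM]
      simp only [ind, hax, if_pos (le_refl M), add_zero, ← EReal.coe_sub,
        EReal.coe_eq_coe_iff]
      have hvx : v * (M * (v / |v|)) = M * |v| := by
        rw [show v * (M * (v / |v|)) = M * (v * (v / |v|)) from by ring,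
          self_div_abs v hv0]
      rw [hvx, max_eq_left (by linarith : (0:ℝ) ≤ |v| - α)]
      ring
    · have key := le_iSup (fun x : ℝ => ((v * x : ℝ) : EReal)
        - ((fun t => ((α * |t| : ℝ) : EReal) + ind (|t| ≤ M)) x)) 0
      refine le_trans (le_of_eq ?_) key
      simp only [ind, abs_zero, if_pos (le_of_lt hM), mul_zero, add_zero,
        ← EReal.coe_sub, EReal.coe_eq_coe_iff]
      rw [max_eq_right (by push_neg at hv; linarith)]
      ring

theorem stmt_14 (lam α M : ℝ) (hlam : 0 < lam) (hα : 0 < α) (hM : 0 < M) :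
    ∀ x : ℝ,
      (⨆ v : ℝ,
          ((x * v : ℝ) : EReal)
            - max (conj (fun t => ((α * |t| : ℝ) : EReal) + ind (|t| ≤ M)) v
                - (lam : EReal)) 0)
        = (((α + lam / M) * |x| : ℝ) : EReal) + ind (|x| ≤ M) := by
  intro x
  have hg : ∀ v : ℝ,
      ((x * v : ℝ) : EReal)
          - max (conj (fun t => ((α * |t| : ℝ) : EReal) + ind (|t| ≤ M)) v
              - (lam : EReal)) 0
        = ((x * v - max (M * max (|v| - α) 0 - lam) 0 : ℝ) : EReal) := by
    intro v
    rw [conj_eq α M hα hM v, ← EReal.coe_sub, ← EReal.coe_zero, ← coe_max',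
      ← EReal.coe_sub]
  simp only [hg]
  by_cases hx : |x| ≤ M
  · rw [ind, if_pos hx, add_zero]
    apply le_antisymm
    · apply iSup_le
      intro v
      rw [EReal.coe_le_coe_iff]
      have h1 : x * v ≤ |x| * |v| := by
        calc x * v ≤ |x * v| := le_abs_self _
        _ = |x| * |v| := abs_mul _ _
      have h2 : 0 ≤ |x| := abs_nonneg x
      have h3 : 0 ≤ |v| := abs_nonneg v
      rcases le_or_gt |v| (α + lam / M) with hv | hv
      · have hge : (0:ℝ) ≤ max (M * max (|v| - α) 0 - lam) 0 := le_max_right _ _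
        nlinarith
      · have hge : M * (|v| - α) - lam ≤ max (M * max (|v| - α) 0 - lam) 0 := by
          refine le_trans ?_ (le_max_left _ _)
          have : |v| - α ≤ max (|v| - α) 0 := le_max_left _ _
          nlinarith
        have hMl : lam / M * M = lam := div_mul_cancel₀ lam (ne_of_gt hM)
        nlinarith
    · by_cases hx0 : x = 0
      · have key := le_iSup (fun v : ℝ =>
          ((x * v - max (M * max (|v| - α) 0 - lam) 0 : ℝ) : EReal)) 0
        refine le_trans (le_of_eq ?_) key
        rw [EReal.coe_eq_coe_iff, hx0]
        rw [abs_zero, mul_zero, mul_zero]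
        have h1 : ((0:ℝ) - α) ⊔ 0 = 0 := max_eq_right (by linarith)
        have h2 : (M * (0:ℝ) - lam) ⊔ 0 = 0 := max_eq_right (by nlinarith)
        rw [h1, h2]
        norm_num
      · set v₀ := (α + lam / M) * (x / |x|) with hv₀
        have habs : |x| > 0 := abs_pos.mpr hx0
        have hlM : 0 < lam / M := div_pos hlam hM
        have hav₀ : |v₀| = α + lam / M := by
          rw [hv₀, abs_mul, abs_div, abs_abs, div_self (ne_of_gt habs), mul_one,
            abs_of_pos (by linarith)]
        have key := le_iSup (fun v : ℝ =>
          ((x * v - max (M * max (|v| - α) 0 - lam) 0 : ℝ) : EReal)) v₀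
        refine le_trans (le_of_eq ?_) key
        rw [EReal.coe_eq_coe_iff]
        have hxv : x * v₀ = (α + lam / M) * |x| := by
          rw [hv₀, show x * ((α + lam / M) * (x / |x|))
              = (α + lam / M) * (x * (x / |x|)) from by ring, self_div_abs x hx0]
        rw [hxv, hav₀]
        have h1 : max (α + lam / M - α) 0 = lam / M := by
          rw [max_eq_left (by linarith)]; ring
        have h2 : M * (lam / M) = lam := by field_simp
        rw [h1, h2, sub_self, max_self, sub_zero]
  · rw [ind, if_neg hx, EReal.add_top_of_ne_bot (EReal.coe_ne_bot _)]
    rw [iSup_eq_top]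
    intro b hb
    induction b with
    | bot => exact ⟨0, EReal.bot_lt_coe _⟩
    | coe r =>
        push_neg at hx
        set t := max ((r + 1) / (|x| - M)) α with ht
        have htα : α ≤ t := le_max_right _ _
        have ht0 : 0 ≤ t := le_trans (le_of_lt hα) htα
        set v := t * (x / |x|) with hv
        have habs : |x| > 0 := by linarith
        have hx0 : x ≠ 0 := by intro h; rw [h, abs_zero] at habs; linarith
        have hav : |v| = t := by
          rw [hv, abs_mul, abs_div, abs_abs, div_self (ne_of_gt habs), mul_one,
            abs_of_nonneg ht0]
        have hxv : x * v = |x| * t := by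
          rw [hv, show x * (t * (x / |x|)) = t * (x * (x / |x|)) from by ring,
            self_div_abs x hx0]; ring
        refine ⟨v, ?_⟩
        rw [EReal.coe_lt_coe_iff, hxv, hav]
        rw [max_eq_left (by linarith : (0:ℝ) ≤ t - α)]
        have h2 : max (M * (t - α) - lam) 0 ≤ M * t := by
          apply max_le
          · nlinarith
          · nlinarith
        have h3 : (|x| - M) * t ≥ r + 1 := by
          have hle := le_max_left ((r + 1) / (|x| - M)) α
          have hxM : 0 < |x| - M := by linarith
          calc r + 1 = (r + 1) / (|x| - M) * (|x| - M) :=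
                (div_mul_cancel₀ _ (ne_of_gt hxM)).symm
          _ ≤ t * (|x| - M) := by nlinarith
          _ = (|x| - M) * t := by ring
        nlinarith
    | top => exact absurd hb (lt_irrefl ⊤)
end
end

section
/- Let λ, α, M > 0 with M ≤ √(λ/α), and let h(x) = αx² + η(|x| ≤ M). Then sup_{v ∈ ℝ}(x·v − max(h*(v) − λ, 0)) = (αM + λ/M)|x| + η(|x| ≤ M) for all x ∈ ℝ. -/
open Classical

noncomputable section

theorem stmt_16 (lam α M : ℝ) (hlam : 0 < lam) (hα : 0 < α) (hM : 0 < M)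
    (hMle : M ≤ Real.sqrt (lam / α)) :
    ∀ x : ℝ,
      (⨆ v : ℝ,
          ((x * v : ℝ) : EReal)
            - max (conj (fun t => ((α * t ^ 2 : ℝ) : EReal) + ind (|t| ≤ M)) v
                - (lam : EReal)) 0)
        = (((α * M + lam / M) * |x| : ℝ) : EReal) + ind (|x| ≤ M) := by
  intro x
  set K : ℝ := α * M + lam / M with hKdef
  -- basic real facts
  have hsq : M ^ 2 ≤ lam / α := by
    have h := Real.sq_sqrt (le_of_lt (div_pos hlam hα))
    nlinarith [Real.sqrt_nonneg (lam / α), hMle]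
  have hαM2 : α * M ^ 2 ≤ lam := (le_div_iff₀' hα).mp hsq
  have hKM : M * K = α * M ^ 2 + lam := by
    rw [hKdef, mul_add, mul_div_assoc', mul_comm M lam, mul_div_assoc, div_self hM.ne', mul_one]; ring
  have hK0 : 0 < K := by positivity
  -- Step 1: conj bound for |v| ≤ K
  have conj_le : ∀ v : ℝ, |v| ≤ K →
      conj (fun t => ((α * t ^ 2 : ℝ) : EReal) + ind (|t| ≤ M)) v ≤ (lam : EReal) := by
    intro v hv
    rw [conj]
    apply iSup_le
    intro t
    by_cases ht : |t| ≤ M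
    · simp only [ind, if_pos ht, add_zero, ← EReal.coe_sub, EReal.coe_le_coe_iff]
      have h1 : v * t ≤ |v| * |t| := by
        calc v * t ≤ |v * t| := le_abs_self _
        _ = |v| * |t| := abs_mul v t
      have h3 : v * t ≤ K * |t| :=
        h1.trans (mul_le_mul_of_nonneg_right hv (abs_nonneg t))
      have h2 : 0 ≤ lam - α * M * |t| := by nlinarith [abs_nonneg t]
      have h4 : M * K * |t| = (α * M ^ 2 + lam) * |t| := by rw [hKM]
      have h5 : M * (v * t - α * t ^ 2 - lam) ≤ 0 := by
        nlinarith [mul_nonneg (sub_nonneg.2 ht) h2, sq_abs t, h4,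
          mul_le_mul_of_nonneg_left h3 hM.le]
      nlinarith [h5, hM]
    · simp only [ind, if_neg ht, EReal.coe_add_top, EReal.sub_top]
      exact bot_le
  -- Step 2: conj value for K ≤ |v|
  have conj_eq : ∀ v : ℝ, K ≤ |v| →
      conj (fun t => ((α * t ^ 2 : ℝ) : EReal) + ind (|t| ≤ M)) v
        = ((M * |v| - α * M ^ 2 : ℝ) : EReal) := by
    intro v hv
    have h2αM : 2 * α * M ≤ |v| := by nlinarith
    rw [conj]
    apply le_antisymm
    · apply iSup_le
      intro t
      by_cases ht : |t| ≤ M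
      · simp only [ind, if_pos ht, add_zero, ← EReal.coe_sub, EReal.coe_le_coe_iff]
        have h1 : v * t ≤ |v| * |t| := by
          calc v * t ≤ |v * t| := le_abs_self _
          _ = |v| * |t| := abs_mul v t
        nlinarith [mul_le_mul_of_nonneg_right h2αM (sub_nonneg.2 ht), sq_abs t,
          sq_nonneg (M - |t|), abs_nonneg t]
      · simp only [ind, if_neg ht, EReal.coe_add_top, EReal.sub_top]
        exact bot_le
    · set t0 : ℝ := if 0 ≤ v then M else -M with ht0
      have habs : |t0| = M := by
        rw [ht0]; split <;> simp [abs_of_pos hM, hM.le, abs_of_neg, neg_neg, hM]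
      have hvt : v * t0 = M * |v| := by
        rw [ht0]; split
        · rw [abs_of_nonneg ‹0 ≤ v›]; ring
        · rw [abs_of_neg (lt_of_not_ge ‹¬ 0 ≤ v›)]; ring
      have : ((M * |v| - α * M ^ 2 : ℝ) : EReal)
          = ((v * t0 : ℝ) : EReal) - ((fun t => ((α * t ^ 2 : ℝ) : EReal) + ind (|t| ≤ M)) t0) := by
        simp only [ind, if_pos (le_of_eq habs), add_zero, ← EReal.coe_sub]
        congr 1
        have : t0 ^ 2 = M ^ 2 := by rw [← sq_abs, habs]
        rw [hvt, this]
      rw [this]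
      exact le_iSup (fun y : ℝ => ((v * y : ℝ) : EReal) - (((α * y ^ 2 : ℝ) : EReal) + ind (|y| ≤ M))) t0
  -- Step 3: the inner max in closed real form
  have g_eq : ∀ v : ℝ,
      max (conj (fun t => ((α * t ^ 2 : ℝ) : EReal) + ind (|t| ≤ M)) v - (lam : EReal)) 0
        = ((max (M * |v| - α * M ^ 2 - lam) 0 : ℝ) : EReal) := by
    intro v
    by_cases hv : |v| ≤ K
    · have h0 : M * |v| - α * M ^ 2 - lam ≤ 0 := by
        nlinarith [mul_le_mul_of_nonneg_left hv hM.le]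
      rw [max_eq_right h0, EReal.coe_zero]
      apply max_eq_right
      calc conj (fun t => ((α * t ^ 2 : ℝ) : EReal) + ind (|t| ≤ M)) v - (lam : EReal)
          ≤ (lam : EReal) - (lam : EReal) := EReal.sub_le_sub (conj_le v hv) le_rfl
        _ = (((lam - lam : ℝ)) : EReal) := (EReal.coe_sub _ _).symm
        _ = 0 := by norm_num
    · push_neg at hv
      have h0 : 0 ≤ M * |v| - α * M ^ 2 - lam := by
        nlinarith [mul_le_mul_of_nonneg_left hv.le hM.le]
      rw [max_eq_left h0, conj_eq v hv.le, ← EReal.coe_sub]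
      apply max_eq_left
      exact EReal.coe_nonneg.2 h0
  -- rewrite the outer sup in real terms
  have hsup : (⨆ v : ℝ,
          ((x * v : ℝ) : EReal)
            - max (conj (fun t => ((α * t ^ 2 : ℝ) : EReal) + ind (|t| ≤ M)) v
                - (lam : EReal)) 0)
      = ⨆ v : ℝ, ((x * v - max (M * |v| - α * M ^ 2 - lam) 0 : ℝ) : EReal) := by
    apply iSup_congr
    intro v
    rw [g_eq v, ← EReal.coe_sub]
  rw [hsup]
  by_cases hx : |x| ≤ M
  · -- bounded case : sup = K * |x|
    simp only [ind, if_pos hx, add_zero]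
    apply le_antisymm
    · apply iSup_le
      intro v
      rw [EReal.coe_le_coe_iff]
      have h1 : x * v ≤ |x| * |v| := by
        calc x * v ≤ |x * v| := le_abs_self _
        _ = |x| * |v| := abs_mul x v
      rcases le_total (M * |v| - α * M ^ 2 - lam) 0 with h | h
      · rw [max_eq_right h]
        have hvK : |v| ≤ K := by nlinarith
        nlinarith [abs_nonneg x, abs_nonneg v, mul_le_mul_of_nonneg_left hvK (abs_nonneg x)]
      · rw [max_eq_left h]
        have hvK : K ≤ |v| := by nlinarith
        nlinarith [mul_nonneg (sub_nonneg.2 hx) (sub_nonneg.2 hvK)]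
    · set v0 : ℝ := if 0 ≤ x then K else -K with hv0
      have habs : |v0| = K := by
        rw [hv0]; split <;> simp [abs_of_pos hK0, hK0.le, abs_of_neg, hK0]
      have hxv : x * v0 = K * |x| := by
        rw [hv0]; split
        · rw [abs_of_nonneg ‹0 ≤ x›]; ring
        · rw [abs_of_neg (lt_of_not_ge ‹¬ 0 ≤ x›)]; ring
      have hF : x * v0 - max (M * |v0| - α * M ^ 2 - lam) 0 = K * |x| := by
        rw [habs, hxv]
        have : M * K - α * M ^ 2 - lam = 0 := by linarith [hKM]
        rw [this, max_self, sub_zero]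
      calc (((α * M + lam / M) * |x| : ℝ) : EReal) = ((x * v0 - max (M * |v0| - α * M ^ 2 - lam) 0 : ℝ) : EReal) := by
            rw [hF, hKdef]
        _ ≤ _ := le_iSup (fun v : ℝ => ((x * v - max (M * |v| - α * M ^ 2 - lam) 0 : ℝ) : EReal)) v0
  · -- unbounded case : sup = ⊤
    push_neg at hx
    simp only [ind, if_neg (not_le.2 hx), EReal.coe_add_top]
    rw [iSup_eq_top]
    intro b hb
    induction b using EReal.rec with
    | bot =>
        exact ⟨0, bot_lt_iff_ne_bot.2 (EReal.coe_ne_bot _)⟩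
    | top => exact absurd hb (lt_irrefl _)
    | coe r =>
        have hxM : 0 < |x| - M := sub_pos.2 hx
        set t : ℝ := max K ((r + 1 - M * K) / (|x| - M)) with htdef
        have htK : K ≤ t := le_max_left _ _
        have ht0 : 0 < t := lt_of_lt_of_le hK0 htK
        set v : ℝ := if 0 ≤ x then t else -t with hvdef
        have habs : |v| = t := by
          rw [hvdef]; split <;> simp [abs_of_pos ht0, ht0.le, abs_of_neg, ht0]
        have hxv : x * v = |x| * t := by
          rw [hvdef]; split
          · rw [abs_of_nonneg ‹0 ≤ x›]
          · rw [abs_of_neg (lt_of_not_ge ‹¬ 0 ≤ x›)]; ring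
        refine ⟨v, ?_⟩
        rw [EReal.coe_lt_coe_iff]
        have hmax : max (M * |v| - α * M ^ 2 - lam) 0 = M * t - M * K := by
          rw [habs]
          have h1 : M * t - α * M ^ 2 - lam = M * t - M * K := by linarith [hKM]
          rw [h1]
          exact max_eq_left (by nlinarith)
        rw [hmax, hxv]
        have h2 : (r + 1 - M * K) / (|x| - M) ≤ t := le_max_right _ _
        have h3 : r + 1 - M * K ≤ t * (|x| - M) := (div_le_iff₀ hxM).mp h2
        linarith [h3]
end
end
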